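/- arXiv:2103.01060 — 4 statements merged into one kernel-verified Lean document; each statement's English description precedes it below -/
import Mathlib

section
/- Let μ1, μ2 be real numbers with μ2 > μ1, and σ1, σ2 > 0. Define f : [0,1] → ℝ by f(x) = (μ2 - μ1)·x / sqrt((σ2² - σ1²)·x + 2σ1² + (μ2 - μ1)²·x·(1 - x)). Then f is strictly increasing on [0,1]. -/
theorem stmt_0 (μ1 μ2 σ1 σ2 : ℝ) (hμ : μ1 < μ2) (hσ1 : 0 < σ1) (hσ2 : 0 < σ2) :
    StrictMonoOn
      (fun x : ℝ =>
        (μ2 - μ1) * x /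
          Real.sqrt ((σ2 ^ 2 - σ1 ^ 2) * x + 2 * σ1 ^ 2 + (μ2 - μ1) ^ 2 * x * (1 - x)))
      (Set.Icc 0 1) := by
  have hδ : 0 < μ2 - μ1 := sub_pos.mpr hμ
  intro x hx y hy hxy
  obtain ⟨hx0, hx1⟩ := hx
  obtain ⟨hy0, hy1⟩ := hy
  have hy0' : 0 < y := lt_of_le_of_lt hx0 hxy
  have hg : ∀ z : ℝ, 0 ≤ z → z ≤ 1 →
      0 < (σ2 ^ 2 - σ1 ^ 2) * z + 2 * σ1 ^ 2 + (μ2 - μ1) ^ 2 * z * (1 - z) := by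
    intro z hz0 hz1
    nlinarith [mul_pos hσ1 hσ1, mul_nonneg (sq_nonneg σ2) hz0,
      mul_nonneg (sq_nonneg σ1) (sub_nonneg.mpr hz1),
      mul_nonneg (mul_nonneg (sq_nonneg (μ2 - μ1)) hz0) (sub_nonneg.mpr hz1)]
  have hgx := hg x hx0 hx1
  have hgy := hg y hy0 hy1
  have hbr : 0 < (σ2 ^ 2 + (μ2 - μ1) ^ 2 - σ1 ^ 2) * (x * y) + 2 * σ1 ^ 2 * (x + y) := by
    nlinarith [mul_nonneg (sq_nonneg σ2) (mul_nonneg hx0 hy0'.le),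
      mul_nonneg (sq_nonneg (μ2 - μ1)) (mul_nonneg hx0 hy0'.le),
      mul_pos (mul_pos hσ1 hσ1) hy0',
      mul_nonneg (mul_pos hσ1 hσ1).le (mul_nonneg hx0 (sub_nonneg.mpr hy1))]
  have key : ((μ2 - μ1) * x) ^ 2 *
        ((σ2 ^ 2 - σ1 ^ 2) * y + 2 * σ1 ^ 2 + (μ2 - μ1) ^ 2 * y * (1 - y)) <
      ((μ2 - μ1) * y) ^ 2 *
        ((σ2 ^ 2 - σ1 ^ 2) * x + 2 * σ1 ^ 2 + (μ2 - μ1) ^ 2 * x * (1 - x)) := by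
    nlinarith [mul_pos (mul_pos (mul_pos hδ hδ) (sub_pos.mpr hxy)) hbr]
  have hdiv : ((μ2 - μ1) * x) ^ 2 /
        ((σ2 ^ 2 - σ1 ^ 2) * x + 2 * σ1 ^ 2 + (μ2 - μ1) ^ 2 * x * (1 - x)) <
      ((μ2 - μ1) * y) ^ 2 /
        ((σ2 ^ 2 - σ1 ^ 2) * y + 2 * σ1 ^ 2 + (μ2 - μ1) ^ 2 * y * (1 - y)) :=
    (div_lt_div_iff₀ hgx hgy).mpr key
  have hrw : ∀ z : ℝ, 0 ≤ z →
      (μ2 - μ1) * z /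
          Real.sqrt ((σ2 ^ 2 - σ1 ^ 2) * z + 2 * σ1 ^ 2 + (μ2 - μ1) ^ 2 * z * (1 - z)) =
        Real.sqrt (((μ2 - μ1) * z) ^ 2 /
          ((σ2 ^ 2 - σ1 ^ 2) * z + 2 * σ1 ^ 2 + (μ2 - μ1) ^ 2 * z * (1 - z))) := by
    intro z hz0
    rw [Real.sqrt_div (sq_nonneg _), Real.sqrt_sq (mul_nonneg hδ.le hz0)]
  simp only
  rw [hrw x hx0, hrw y hy0]
  exact Real.sqrt_lt_sqrt (div_nonneg (sq_nonneg _) hgx.le) hdiv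
end

section
/- Let μ1, μ2 ∈ ℝ with μ2 ≠ μ1 and σ1, σ2 > 0. Define f(x) = (μ2 - μ1)·x / sqrt((σ2² - σ1²)·x + 2σ1² + (μ2 - μ1)²·x·(1-x)) for x ∈ (0,1). Then for all x ∈ (0,1), |f'(x)| ≥ κ_a where κ_a := |μ2 - μ1| · 2·min(σ1², σ2²) / (2·max(σ1², σ2²) + (μ2 - μ1)²/4)^{3/2}, and κ_a > 0. -/
theorem stmt_1 (μ1 μ2 σ1 σ2 : ℝ) (hμ : μ2 ≠ μ1) (hσ1 : 0 < σ1) (hσ2 : 0 < σ2) :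
    (0 <
        |μ2 - μ1| * (2 * min (σ1 ^ 2) (σ2 ^ 2)) /
          (2 * max (σ1 ^ 2) (σ2 ^ 2) + (μ2 - μ1) ^ 2 / 4) ^ ((3 : ℝ) / 2)) ∧
      ∀ x ∈ Set.Ioo (0 : ℝ) 1,
        |μ2 - μ1| * (2 * min (σ1 ^ 2) (σ2 ^ 2)) /
            (2 * max (σ1 ^ 2) (σ2 ^ 2) + (μ2 - μ1) ^ 2 / 4) ^ ((3 : ℝ) / 2) ≤
          |deriv
              (fun y : ℝ =>
                (μ2 - μ1) * y /
                  Real.sqrt ((σ2 ^ 2 - σ1 ^ 2) * y + 2 * σ1 ^ 2 + (μ2 - μ1) ^ 2 * y * (1 - y)))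
              x| := by
  have hA : μ2 - μ1 ≠ 0 := sub_ne_zero.mpr hμ
  set A : ℝ := μ2 - μ1 with hAdef
  have hAabs : 0 < |A| := abs_pos.mpr hA
  set m : ℝ := min (σ1 ^ 2) (σ2 ^ 2) with hmdef
  set M : ℝ := max (σ1 ^ 2) (σ2 ^ 2) with hMdef
  have hm : 0 < m := lt_min (by positivity) (by positivity)
  have hM : 0 < M := lt_of_lt_of_le hm (min_le_max)
  set D : ℝ := 2 * M + A ^ 2 / 4 with hDdef
  have hD : 0 < D := by
    have : 0 ≤ A ^ 2 / 4 := by positivity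
    rw [hDdef]; linarith
  have hDr : 0 < D ^ ((3 : ℝ) / 2) := Real.rpow_pos_of_pos hD _
  clear_value A m M D
  refine ⟨div_pos (by positivity) hDr, ?_⟩
  rintro x ⟨hx0, hx1⟩
  set g : ℝ → ℝ := fun y => (σ2 ^ 2 - σ1 ^ 2) * y + 2 * σ1 ^ 2 + A ^ 2 * y * (1 - y)
    with hgdef
  have hgx : g x = (σ2 ^ 2 - σ1 ^ 2) * x + 2 * σ1 ^ 2 + A ^ 2 * x * (1 - x) := rfl
  have hgpos : 0 < g x := by
    rw [hgx]
    nlinarith [mul_nonneg (mul_nonneg (sq_nonneg A) hx0.le) (sub_pos.mpr hx1).le,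
      sq_nonneg σ1, sq_nonneg σ2, mul_pos hx0 (by positivity : (0:ℝ) < σ2 ^ 2)]
  have hgle : g x ≤ D := by
    have h1 : (σ2 ^ 2 - σ1 ^ 2) * x + 2 * σ1 ^ 2 ≤ 2 * M := by
      rcases le_total (σ1 ^ 2) (σ2 ^ 2) with h | h
      · have hMe : M = σ2 ^ 2 := hMdef.trans (max_eq_right h)
        nlinarith
      · have hMe : M = σ1 ^ 2 := hMdef.trans (max_eq_left h)
        nlinarith
    have h2 : A ^ 2 * x * (1 - x) ≤ A ^ 2 / 4 := by
      nlinarith [sq_nonneg (x - 1 / 2), sq_nonneg A]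
    rw [hgx, hDdef]; linarith
  -- derivative of g
  have hg' : HasDerivAt g ((σ2 ^ 2 - σ1 ^ 2) + A ^ 2 * (1 - 2 * x)) x := by
    have h1 : HasDerivAt (fun y : ℝ => (σ2 ^ 2 - σ1 ^ 2) * y) (σ2 ^ 2 - σ1 ^ 2) x := by
      simpa using (hasDerivAt_id x).const_mul (σ2 ^ 2 - σ1 ^ 2)
    have h2 : HasDerivAt (fun y : ℝ => A ^ 2 * (y * (1 - y)))
        (A ^ 2 * (1 * (1 - x) + x * (-1))) x := by
      have := ((hasDerivAt_id x).mul
        ((hasDerivAt_const x (1:ℝ)).sub (hasDerivAt_id x))).const_mul (A ^ 2)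
      simpa using this
    have h3 := (h1.add_const (2 * σ1 ^ 2)).add h2
    have heq : (fun y : ℝ => (σ2 ^ 2 - σ1 ^ 2) * y + 2 * σ1 ^ 2 + A ^ 2 * (y * (1 - y))) = g := by
      funext y; rw [hgdef]; ring
    simp only [Pi.add_def] at h3
    rw [heq] at h3
    exact h3.congr_deriv (by ring)
  clear_value g
  set gd : ℝ := (σ2 ^ 2 - σ1 ^ 2) + A ^ 2 * (1 - 2 * x) with hgddef
  clear_value gd
  set s : ℝ := Real.sqrt (g x) with hsdef
  have hs : 0 < s := Real.sqrt_pos.mpr hgpos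
  have hs2 : s ^ 2 = g x := Real.sq_sqrt hgpos.le
  have hsq : HasDerivAt (fun y => Real.sqrt (g y)) (gd / (2 * s)) x :=
    hg'.sqrt (ne_of_gt hgpos)
  have hnum : HasDerivAt (fun y : ℝ => A * y) A x := by
    simpa using (hasDerivAt_id x).const_mul A
  have hf : HasDerivAt (fun y : ℝ => A * y / Real.sqrt (g y))
      ((A * s - A * x * (gd / (2 * s))) / s ^ 2) x := hnum.div hsq (ne_of_gt hs)
  have hderiv : deriv (fun y : ℝ => A * y / Real.sqrt (g y)) x
      = (A * s - A * x * (gd / (2 * s))) / s ^ 2 := hf.deriv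
  clear_value s
  set N : ℝ := ((σ2 ^ 2 - σ1 ^ 2) + A ^ 2) * x / 2 + 2 * σ1 ^ 2 with hNdef
  clear_value N
  have hkey : (A * s - A * x * (gd / (2 * s))) / s ^ 2 = A * N / s ^ 3 := by
    have hs0 : s ≠ 0 := ne_of_gt hs
    rw [hgx] at hs2
    rw [hgddef, hNdef]
    field_simp
    linear_combination 2 * hs2
  have hNge : 2 * m ≤ N := by
    have key : ∀ a b c t : ℝ, 0 ≤ c → 0 ≤ t → t ≤ 1 → b ≤ a →
        2 * b ≤ (b - a + c) * t / 2 + 2 * a := by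
      intro a b c t hc ht0 ht1 hba
      nlinarith [mul_nonneg (sub_nonneg.mpr hba) (by linarith : (0:ℝ) ≤ 2 - t / 2),
        mul_nonneg hc ht0]
    rw [hNdef]
    rcases le_total (σ1 ^ 2) (σ2 ^ 2) with h | h
    · have hme : m = σ1 ^ 2 := hmdef.trans (min_eq_left h)
      rw [hme]
      have h0 : 0 ≤ (σ2 ^ 2 - σ1 ^ 2 + A ^ 2) * x :=
        mul_nonneg (by linarith [sq_nonneg A]) hx0.le
      linarith
    · have hme : m = σ2 ^ 2 := hmdef.trans (min_eq_right h)
      rw [hme]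
      exact key (σ1 ^ 2) (σ2 ^ 2) (A ^ 2) x (sq_nonneg A) hx0.le hx1.le h
  have hNpos : 0 < N := lt_of_lt_of_le (by positivity) hNge
  have hs3 : s ^ 3 ≤ D ^ ((3 : ℝ) / 2) := by
    have h1 : s ≤ Real.sqrt D := by rw [hsdef]; exact Real.sqrt_le_sqrt hgle
    have h2 : s ^ 3 ≤ Real.sqrt D ^ 3 := pow_le_pow_left₀ hs.le h1 3
    have h3 : Real.sqrt D ^ 3 = D ^ ((3 : ℝ) / 2) := by
      rw [Real.sqrt_eq_rpow, ← Real.rpow_natCast (D ^ ((1 : ℝ) / 2)) 3,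
        ← Real.rpow_mul hD.le]
      norm_num
    linarith [h2, h3.le]
  have hs3pos : 0 < s ^ 3 := by positivity
  have hfeq : (fun y : ℝ => A * y /
        Real.sqrt ((σ2 ^ 2 - σ1 ^ 2) * y + 2 * σ1 ^ 2 + A ^ 2 * y * (1 - y)))
      = fun y : ℝ => A * y / Real.sqrt (g y) := by rw [hgdef]
  rw [hfeq, hderiv, hkey, abs_div, abs_mul, abs_of_pos hNpos, abs_of_pos hs3pos]
  apply div_le_div₀ (by positivity) _ hs3pos hs3
  exact mul_le_mul_of_nonneg_left hNge (abs_nonneg A)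
end

section
/- Let μ1, μ2 ∈ ℝ with μ2 ≠ μ1 and σ1, σ2 > 0. Define f(x) = (μ2 - μ1)·x / sqrt((σ2² - σ1²)·x + 2σ1² + (μ2 - μ1)²·x·(1-x)) for x ∈ (0,1). Then for all x ∈ (0,1), |f'(x)| ≤ κ_b where κ_b := |μ2 - μ1| · (2·max(σ1², σ2²) + (μ2 - μ1)²) / (2·min(σ1², σ2²))^{3/2}. -/
theorem stmt_2 (μ1 μ2 σ1 σ2 : ℝ) (hμ : μ2 ≠ μ1) (hσ1 : 0 < σ1) (hσ2 : 0 < σ2) :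
    ∀ x ∈ Set.Ioo (0 : ℝ) 1,
      |deriv
          (fun y : ℝ =>
            (μ2 - μ1) * y /
              Real.sqrt ((σ2 ^ 2 - σ1 ^ 2) * y + 2 * σ1 ^ 2 + (μ2 - μ1) ^ 2 * y * (1 - y)))
          x| ≤
        |μ2 - μ1| * (2 * max (σ1 ^ 2) (σ2 ^ 2) + (μ2 - μ1) ^ 2) /
          (2 * min (σ1 ^ 2) (σ2 ^ 2)) ^ ((3 : ℝ) / 2) := by
  rintro x ⟨hx0, hx1⟩
  set c : ℝ := μ2 - μ1 with hc
  set m : ℝ := min (σ1 ^ 2) (σ2 ^ 2) with hm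
  set M : ℝ := max (σ1 ^ 2) (σ2 ^ 2) with hM
  have hm1 : m ≤ σ1 ^ 2 := min_le_left _ _
  have hm2 : m ≤ σ2 ^ 2 := min_le_right _ _
  have hM1 : σ1 ^ 2 ≤ M := le_max_left _ _
  have hM2 : σ2 ^ 2 ≤ M := le_max_right _ _
  have hmpos : 0 < m := lt_min (by positivity) (by positivity)
  set D : ℝ := (σ2 ^ 2 - σ1 ^ 2) * x + 2 * σ1 ^ 2 + c ^ 2 * x * (1 - x) with hD
  have hDge : 2 * m ≤ D := by
    have h1 : x * (σ2 ^ 2 - m) ≥ 0 := mul_nonneg hx0.le (by linarith)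
    have h2 : (2 - x) * (σ1 ^ 2 - m) ≥ 0 := mul_nonneg (by linarith) (by linarith)
    have h3 : c ^ 2 * x * (1 - x) ≥ 0 := by
      have := sq_nonneg c
      have := mul_nonneg hx0.le (by linarith : (0:ℝ) ≤ 1 - x)
      nlinarith
    nlinarith
  have hDpos : 0 < D := lt_of_lt_of_le (by positivity) hDge
  set s : ℝ := Real.sqrt D with hs
  have hspos : 0 < s := Real.sqrt_pos.mpr hDpos
  have hs2 : s ^ 2 = D := Real.sq_sqrt hDpos.le
  -- derivative of inner function
  set g' : ℝ := (σ2 ^ 2 - σ1 ^ 2) + c ^ 2 * (1 - 2 * x) with hg'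
  have hg : HasDerivAt (fun y : ℝ =>
      (σ2 ^ 2 - σ1 ^ 2) * y + 2 * σ1 ^ 2 + c ^ 2 * y * (1 - y)) g' x := by
    have h1 : HasDerivAt (fun y : ℝ => (σ2 ^ 2 - σ1 ^ 2) * y) (σ2 ^ 2 - σ1 ^ 2) x := by
      simpa using (hasDerivAt_id x).const_mul (σ2 ^ 2 - σ1 ^ 2)
    have h2 : HasDerivAt (fun y : ℝ => c ^ 2 * y * (1 - y))
        (c ^ 2 * (1 - x) + c ^ 2 * x * (-1)) x := by
      have ha : HasDerivAt (fun y : ℝ => c ^ 2 * y) (c ^ 2) x := by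
        simpa using (hasDerivAt_id x).const_mul (c ^ 2)
      have hb : HasDerivAt (fun y : ℝ => 1 - y) (-1) x := by
        exact ((hasDerivAt_const x (1:ℝ)).sub (hasDerivAt_id x)).congr_deriv (by norm_num)
      have := ha.mul hb
      exact this
    have := (h1.add_const (2 * σ1 ^ 2)).add h2
    refine this.congr_deriv ?_
    rw [hg']; ring
  have hsqrt : HasDerivAt (fun y : ℝ =>
      Real.sqrt ((σ2 ^ 2 - σ1 ^ 2) * y + 2 * σ1 ^ 2 + c ^ 2 * y * (1 - y)))
      (1 / (2 * s) * g') x := by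
    have := (Real.hasDerivAt_sqrt hDpos.ne').comp x hg
    simpa [hs, Function.comp_def] using this
  have hf : HasDerivAt (fun y : ℝ =>
      c * y / Real.sqrt ((σ2 ^ 2 - σ1 ^ 2) * y + 2 * σ1 ^ 2 + c ^ 2 * y * (1 - y)))
      ((c * s - c * x * (1 / (2 * s) * g')) / s ^ 2) x := by
    have hcy : HasDerivAt (fun y : ℝ => c * y) c x := by
      simpa using (hasDerivAt_id x).const_mul c
    exact hcy.div hsqrt hspos.ne'
  have hderiv : deriv (fun y : ℝ =>
      c * y / Real.sqrt ((σ2 ^ 2 - σ1 ^ 2) * y + 2 * σ1 ^ 2 + c ^ 2 * y * (1 - y))) x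
      = (c * s - c * x * (1 / (2 * s) * g')) / s ^ 2 := hf.deriv
  rw [hderiv]
  -- rewrite derivative in nicer form
  set N : ℝ := (σ2 ^ 2 - σ1 ^ 2) * x + 4 * σ1 ^ 2 + c ^ 2 * x with hN
  have hform : (c * s - c * x * (1 / (2 * s) * g')) / s ^ 2 = c * N / (2 * s ^ 3) := by
    have hNeq : N = 2 * s ^ 2 - x * g' := by rw [hs2, hN, hg', hD]; ring
    rw [hNeq]
    field_simp
  rw [hform]
  have hNpos : 0 < N := by nlinarith [sq_nonneg c, mul_nonneg (sq_nonneg c) hx0.le]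
  have hNle : N ≤ 2 * (2 * M + c ^ 2) := by
    have h1 : x * (M - σ2 ^ 2) ≥ 0 := mul_nonneg hx0.le (by linarith)
    have h2 : (4 - x) * (M - σ1 ^ 2) ≥ 0 := mul_nonneg (by linarith) (by linarith)
    have h3 : c ^ 2 * (2 - x) ≥ 0 := mul_nonneg (sq_nonneg c) (by linarith)
    nlinarith
  have h32 : (2 * m) ^ ((3:ℝ)/2) ≤ s ^ 3 := by
    have hs3 : s ^ 3 = D ^ ((3:ℝ)/2) := by
      rw [hs, Real.sqrt_eq_rpow, ← Real.rpow_natCast (D ^ ((1:ℝ)/2)) 3,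
        ← Real.rpow_mul hDpos.le]
      norm_num
    rw [hs3]
    exact Real.rpow_le_rpow (by positivity) hDge (by norm_num)
  have hrpos : (0:ℝ) < (2 * m) ^ ((3:ℝ)/2) := Real.rpow_pos_of_pos (by positivity) _
  rw [abs_div, abs_mul, abs_of_pos hNpos, abs_of_pos (by positivity : (0:ℝ) < 2 * s ^ 3)]
  rw [div_le_div_iff₀ (by positivity) hrpos]
  calc |c| * N * (2 * m) ^ ((3:ℝ)/2)
      ≤ (|c| * (2 * (2 * M + c ^ 2))) * s ^ 3 := by
        apply mul_le_mul (mul_le_mul_of_nonneg_left hNle (abs_nonneg _)) h32 hrpos.le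
        positivity
    _ = |c| * (2 * M + c ^ 2) * (2 * s ^ 3) := by ring
end

section
/- Let μ2 > μ1 and σ1, σ2 > 0 with σ2² > σ1². Define g(x) = (μ2 − μ1)·x / sqrt((σ2² − σ1²)·x + 2σ1²) for x ∈ [0,1]. Then g is strictly concave on [0,1]. -/
open Real Set Filter

lemma aux14 (a b c : ℝ) (ha : 0 < a) (hb : 0 < b) (hc : 0 < c) :
    StrictConcaveOn ℝ (Set.Icc (0 : ℝ) 1) (fun x => c * x / Real.sqrt (a * x + b)) := by
  set f : ℝ → ℝ := fun x => c * x / Real.sqrt (a * x + b) with hf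
  set g1 : ℝ → ℝ := fun x => c * (a * x + 2 * b) / (2 * (a * x + b) * Real.sqrt (a * x + b)) with hg1
  have hU : IsOpen {x : ℝ | 0 < a * x + b} := isOpen_lt continuous_const (by continuity)
  have hderiv1 : ∀ x, 0 < a * x + b → HasDerivAt f (g1 x) x := by
    intro x hx
    set s := Real.sqrt (a * x + b) with hsdef
    have hs : 0 < s := Real.sqrt_pos.2 hx
    have hs2 : s * s = a * x + b := Real.mul_self_sqrt hx.le
    have hp : HasDerivAt (fun y : ℝ => a * y + b) a x := by
      simpa using ((hasDerivAt_id x).const_mul a).add_const b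
    have hsq : HasDerivAt (fun y : ℝ => Real.sqrt (a * y + b)) (a / (2 * s)) x := by
      simpa [div_eq_mul_inv, mul_comm, hsdef, Function.comp_def] using
        (Real.hasDerivAt_sqrt hx.ne').comp x hp
    have hnum : HasDerivAt (fun y : ℝ => c * y) c x := by
      simpa using (hasDerivAt_id x).const_mul c
    have h := hnum.div hsq hs.ne'
    refine h.congr_deriv ?_
    have e1 : a * x + b = s * s := hs2.symm
    rw [hg1]
    field_simp
    rw [← hsdef]
    linear_combination (a*x) * hs2
  have key : ∀ x ∈ interior (Set.Icc (0:ℝ) 1), deriv^[2] f x < 0 := by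
    intro x hxI
    rw [interior_Icc] at hxI
    have hx : 0 < a * x + b := by nlinarith [hxI.1]
    have hmem : {y : ℝ | 0 < a * y + b} ∈ nhds x := hU.mem_nhds hx
    have hEq : deriv f =ᶠ[nhds x] g1 :=
      Filter.eventuallyEq_of_mem hmem (fun y hy => (hderiv1 y hy).deriv)
    have h2 : deriv^[2] f x = deriv g1 x := by
      show deriv (deriv f) x = deriv g1 x
      exact hEq.deriv_eq
    set s := Real.sqrt (a * x + b) with hsdef
    have hs : 0 < s := Real.sqrt_pos.2 hx
    have hs2 : s * s = a * x + b := Real.mul_self_sqrt hx.le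
    have hp : HasDerivAt (fun y : ℝ => a * y + b) a x := by
      simpa using ((hasDerivAt_id x).const_mul a).add_const b
    have hsq : HasDerivAt (fun y : ℝ => Real.sqrt (a * y + b)) (a / (2 * s)) x := by
      simpa [div_eq_mul_inv, mul_comm, hsdef, Function.comp_def] using (Real.hasDerivAt_sqrt hx.ne').comp x hp
    have hN : HasDerivAt (fun y : ℝ => c * (a * y + 2 * b)) (c * a) x := by
      simpa using (((hasDerivAt_id x).const_mul a).add_const (2*b)).const_mul c
    have hD : HasDerivAt (fun y : ℝ => 2 * (a * y + b) * Real.sqrt (a * y + b))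
        (2 * a * s + 2 * (a * x + b) * (a / (2 * s))) x := by
      exact (hp.const_mul 2).mul hsq
    have hDx : 2 * (a * x + b) * s ≠ 0 := by positivity
    have hg1d := hN.div hD hDx
    have hval : deriv g1 x =
        (c * a * (2 * (a * x + b) * s) -
          c * (a * x + 2 * b) * (2 * a * s + 2 * (a * x + b) * (a / (2 * s)))) /
          (2 * (a * x + b) * s) ^ 2 := hg1d.deriv
    rw [h2, hval]
    apply div_neg_of_neg_of_pos
    · have hnum : c * a * (2 * (a * x + b) * s) -
          c * (a * x + 2 * b) * (2 * a * s + 2 * (a * x + b) * (a / (2 * s)))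
          = a * c * s * (-(a*x) - 4*b) := by
        field_simp
        linear_combination (a*x+2*b) * hs2
      rw [hnum]
      have h1 : 0 < a * c * s := by positivity
      have h2 : -(a*x) - 4*b < 0 := by nlinarith [hxI.1]
      exact mul_neg_of_pos_of_neg h1 h2
    · positivity
  exact strictConcaveOn_of_deriv2_neg (convex_Icc 0 1)
    (by
      apply ContinuousOn.div
      · fun_prop
      · fun_prop
      · intro x hxI
        have : 0 < a * x + b := by nlinarith [hxI.1]
        positivity)
    key

theorem stmt_14 (μ1 μ2 σ1 σ2 : ℝ) (hμ : μ1 < μ2) (hσ1 : 0 < σ1) (hσ2 : 0 < σ2)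
    (hσ : σ1 ^ 2 < σ2 ^ 2) :
    StrictConcaveOn ℝ (Set.Icc (0 : ℝ) 1)
      (fun x => (μ2 - μ1) * x / Real.sqrt ((σ2 ^ 2 - σ1 ^ 2) * x + 2 * σ1 ^ 2)) := by
  exact aux14 (σ2 ^ 2 - σ1 ^ 2) (2 * σ1 ^ 2) (μ2 - μ1) (by linarith) (by positivity) (by linarith)
end
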